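/- Let L be a first-order language, κ an infinite cardinal, and M a κ-compact L-structure. Let X ⊆ (Fin n → M) and Y ⊆ (Fin m → M) be ∅-definable, I an index set of cardinality less than κ, and (R i)_{i ∈ I} a family of ∅-definable subsets of ((Fin n ⊕ Fin m) → M) that is directed under inclusion (for all i, j there is k with R i ∪ R j ⊆ R k). Suppose the union ⋃_{i ∈ I} R i is the graph of a total function φ : X → Y, i.e. ⋃_i R i ⊆ {z | z ∘ Sum.inl ∈ X ∧ z ∘ Sum.inr ∈ Y} and for every x ∈ X there is exactly one y ∈ Y with the corresponding tuple in ⋃_i R i. Then there exists j ∈ I with ⋃_{i ∈ I} R i = R j; in particular the graph of φ is ∅-definable and φ is an ∅-definable map. -/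

import Mathlib

open FirstOrder Cardinal

/-- An `L`-structure `M` is `κ`-compact if every set of fewer than `κ` formulas (in any
variable index type) that is finitely realized in `M` is realized in `M`. -/
def KappaCompact (L : FirstOrder.Language.{0, 0}) (κ : Cardinal.{0}) (M : Type)
    [L.Structure M] : Prop :=
  ∀ (α : Type) (Φ : Set (L.Formula α)), #Φ < κ →
    (∀ Φ₀ : Set (L.Formula α), Φ₀ ⊆ Φ → Φ₀.Finite →
      ∃ v : α → M, ∀ φ ∈ Φ₀, φ.Realize v) →
    ∃ v : α → M, ∀ φ ∈ Φ, φ.Realize v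

/-- A function `g` from a subset `X` of `Fin n → M` to `Fin m → M` is ∅-definable if its
graph is a ∅-definable subset of `(Fin n ⊕ Fin m) → M`. -/
def DefinableFun (L : FirstOrder.Language.{0, 0}) (M : Type) [L.Structure M]
    {n m : ℕ} (X : Set (Fin n → M)) (g : (Fin n → M) → (Fin m → M)) : Prop :=
  Set.Definable (∅ : Set M) L
    {z : Fin n ⊕ Fin m → M | z ∘ Sum.inl ∈ X ∧ g (z ∘ Sum.inl) = z ∘ Sum.inr}

theorem aux_fin_dir {β I : Type} [Nonempty I] (R : I → Set β)
    (hdir : ∀ i j, ∃ k, R i ∪ R j ⊆ R k) (T : Set I) (hT : T.Finite) :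
    ∃ k, ∀ i ∈ T, R i ⊆ R k := by
  refine Set.Finite.induction_on (motive := fun T _ => ∃ k, ∀ i ∈ T, R i ⊆ R k) T hT
    ⟨Classical.arbitrary I, by simp⟩ ?_
  rintro a s _ _ ⟨k, hk⟩
  obtain ⟨k', hk'⟩ := hdir a k
  exact ⟨k', fun i hi => by
    rcases hi with rfl | hi
    · exact fun x hx => hk' (Or.inl hx)
    · exact fun x hx => hk' (Or.inr (hk i hi hx))⟩

theorem directed_union_graph_definable
    (L : FirstOrder.Language.{0, 0}) (κ : Cardinal.{0}) (M : Type) [L.Structure M]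
    (hκ : ℵ₀ ≤ κ) (hM : KappaCompact L κ M)
    {n m : ℕ} (X : Set (Fin n → M)) (hX : Set.Definable (∅ : Set M) L X)
    (Y : Set (Fin m → M)) (hY : Set.Definable (∅ : Set M) L Y)
    (I : Type) [Nonempty I] (hI : #I < κ)
    (R : I → Set (Fin n ⊕ Fin m → M))
    (hR : ∀ i, Set.Definable (∅ : Set M) L (R i))
    (hdir : ∀ i j, ∃ k, R i ∪ R j ⊆ R k)
    (hsub : (⋃ i, R i) ⊆ {z | z ∘ Sum.inl ∈ X ∧ z ∘ Sum.inr ∈ Y})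
    (hfun : ∀ x ∈ X, ∃! y, y ∈ Y ∧ Sum.elim x y ∈ ⋃ i, R i) :
    (∃ j, (⋃ i, R i) = R j) ∧
      Set.Definable (∅ : Set M) L (⋃ i, R i) ∧
      ∀ φ : (Fin n → M) → (Fin m → M),
        (∀ x ∈ X, φ x ∈ Y ∧ Sum.elim x (φ x) ∈ ⋃ i, R i) →
        DefinableFun L M X φ := by
  -- extract formulas
  obtain ⟨φX, hφX⟩ := Set.empty_definable_iff.mp hX
  choose ψ hψ using fun i => Set.empty_definable_iff.mp (hR i)
  -- the key step: ∃ j, ⋃ = R j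
  have key : ∃ j, (⋃ i, R i) = R j := by
    by_contra hcon
    push_neg at hcon
    -- formulas over Fin n
    set F : I → L.Formula (Fin n) := fun i =>
      ((ψ i).iExs (Fin m)).not with hF
    set Φ : Set (L.Formula (Fin n)) := insert φX (Set.range F) with hΦ
    have hcard : #Φ < κ := by
      apply lt_of_le_of_lt (mk_insert_le)
      exact Cardinal.add_lt_of_lt hκ (lt_of_le_of_lt mk_range_le hI)
        (one_lt_aleph0.trans_le hκ)
    have hfin : ∀ Φ₀ : Set (L.Formula (Fin n)), Φ₀ ⊆ Φ → Φ₀.Finite →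
        ∃ v : Fin n → M, ∀ φ ∈ Φ₀, φ.Realize v := by
      intro Φ₀ hΦ₀ hΦ₀fin
      -- choose indices for formulas in Φ₀ ∩ range F
      classical
      have hchoice : ∀ φ ∈ Φ₀ ∩ Set.range F, ∃ i, F i = φ := fun φ hφ => hφ.2
      choose g hg using hchoice
      set T : Set I := {i | ∃ (φ : L.Formula (Fin n)) (h : φ ∈ Φ₀ ∩ Set.range F), g φ h = i}
      have hTfin : T.Finite := by
        have : T ⊆ (fun p : {φ // φ ∈ Φ₀ ∩ Set.range F} => g p.1 p.2) '' Set.univ := by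
          rintro i ⟨φ, h, rfl⟩
          exact ⟨⟨φ, h⟩, trivial, rfl⟩
        exact Set.Finite.subset (Set.Finite.image _ (Set.finite_univ_iff.mpr
          (by
            have : (Φ₀ ∩ Set.range F).Finite := hΦ₀fin.inter_of_left _
            exact this.to_subtype))) this
      obtain ⟨k, hk⟩ := aux_fin_dir R hdir T hTfin
      -- z ∈ ⋃ \ R k
      have hne : (⋃ i, R i) ≠ R k := hcon k
      have hsup : R k ⊆ ⋃ i, R i := Set.subset_iUnion R k
      obtain ⟨z, hz, hzk⟩ : ∃ z, z ∈ (⋃ i, R i) ∧ z ∉ R k := by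
        by_contra h
        push_neg at h
        exact hne (Set.Subset.antisymm h hsup)
      refine ⟨z ∘ Sum.inl, ?_⟩
      have hzX : z ∘ Sum.inl ∈ X := (hsub hz).1
      have hzelim : Sum.elim (z ∘ Sum.inl) (z ∘ Sum.inr) = z := by
        funext a; cases a <;> rfl
      intro φ hφ
      rcases hΦ₀ hφ with rfl | hφr
      · rw [hφX] at hzX; exact hzX
      · -- φ = F i for chosen i = g φ ⟨hφ, hφr⟩
        have hmem : φ ∈ Φ₀ ∩ Set.range F := ⟨hφ, hφr⟩
        have hgi := hg φ hmem
        rw [← hgi]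
        set i := g φ hmem
        have hiT : i ∈ T := ⟨φ, hmem, rfl⟩
        simp only [hF, Language.Formula.realize_not, Language.Formula.realize_iExs]
        rintro ⟨w, hw⟩
        have hwRi : Sum.elim (z ∘ Sum.inl) w ∈ R i := by
          rw [hψ i]
          exact hw
        have hwU : Sum.elim (z ∘ Sum.inl) w ∈ ⋃ i, R i := Set.mem_iUnion.mpr ⟨i, hwRi⟩
        obtain ⟨y, _, hyuniq⟩ := hfun _ hzX
        have h1 : w = y := hyuniq w ⟨(hsub hwU).2, hwU⟩
        have h2 : z ∘ Sum.inr = y := hyuniq _ ⟨(hsub hz).2, by rw [hzelim]; exact hz⟩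
        have : z ∈ R i := by rw [← hzelim, h2, ← h1]; exact hwRi
        exact hzk (hk i hiT this)
    obtain ⟨v, hv⟩ := hM (Fin n) Φ hcard hfin
    have hvX : v ∈ X := by
      rw [hφX]; exact hv φX (Set.mem_insert _ _)
    obtain ⟨y, ⟨_, hyU⟩, _⟩ := hfun v hvX
    obtain ⟨i, hyi⟩ := Set.mem_iUnion.mp hyU
    have := hv (F i) (Set.mem_insert_iff.mpr (Or.inr ⟨i, rfl⟩))
    simp only [hF, Language.Formula.realize_not, Language.Formula.realize_iExs] at this
    exact this ⟨y, by rw [hψ i] at hyi; exact hyi⟩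
  obtain ⟨j, hj⟩ := key
  refine ⟨⟨j, hj⟩, hj ▸ hR j, ?_⟩
  intro φ hφ
  unfold DefinableFun
  have hgraph : {z : Fin n ⊕ Fin m → M | z ∘ Sum.inl ∈ X ∧ φ (z ∘ Sum.inl) = z ∘ Sum.inr}
      = ((fun z : Fin n ⊕ Fin m → M => z ∘ Sum.inl) ⁻¹' X) ∩ R j := by
    ext z
    have hzelim : Sum.elim (z ∘ Sum.inl) (z ∘ Sum.inr) = z := by
      funext a; cases a <;> rfl
    constructor
    · rintro ⟨hzX, hzφ⟩
      refine ⟨hzX, ?_⟩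
      have := (hφ _ hzX).2
      rw [hzφ, hzelim, hj] at this
      exact this
    · rintro ⟨hzX, hzR⟩
      refine ⟨hzX, ?_⟩
      obtain ⟨y, _, hyuniq⟩ := hfun _ hzX
      have h1 : φ (z ∘ Sum.inl) = y := hyuniq _ (hφ _ hzX)
      have h2 : z ∘ Sum.inr = y := hyuniq _ ⟨(hsub (hj ▸ Set.subset_iUnion R j hzR)).2,
        by rw [hzelim, hj]; exact hzR⟩
      rw [h1, h2]
  rw [hgraph]
  exact (hX.preimage_comp Sum.inl).inter (hR j)
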